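/- arXiv:2409.14991 — 2 statements merged into one kernel-verified Lean document; each statement's English description precedes it below -/
import Mathlib

section
/- With 𝓕^m_l as above, the telescoping identity Σ_{q_{2i},...,q_{2m-1} ∈ ℤ_d} 𝓕^m_l(t) = 𝓕^i_l(t) holds for all t ∈ ℤ_d, all l, and all 2 ≤ i ≤ m, where 𝓕^i_l(t) := κ_B(t+q_2|1)·Π_{k=2}^i g^k_l(t - c_k). -/
open scoped BigOperators

noncomputable section

/-- The component `q_i` (for `i ∈ {2, ..., 2m-1}`) of the tuple
`l = (q_2, ..., q_{2m-1}) ∈ ℤ_d^{2m-2}` (coordinate `i-2` of `l`), and `0` otherwise. -/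
def qOf (d m : ℕ) (l : Fin (2 * m - 2) → ZMod d) (i : ℕ) : ZMod d :=
  if h : i - 2 < 2 * m - 2 then l ⟨i - 2, h⟩ else 0

/-- `c_k = Σ_{i=3}^{2k-2} q_i` (so `c_2 = 0`). -/
def cOf (d m : ℕ) (l : Fin (2 * m - 2) → ZMod d) (k : ℕ) : ZMod d :=
  ∑ i ∈ Finset.Icc 3 (2 * k - 2), qOf d m l i

/-- Alice's marginal `κ_A(a|x)` (computed with Bob's input `1`; for a no-signaling
behavior it is independent of Bob's input). -/
def margA (d : ℕ) [NeZero d] (κ : ℕ → ℕ → ZMod d → ZMod d → ℝ) (x : ℕ) (a : ZMod d) : ℝ :=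
  ∑ b : ZMod d, κ x 1 a b

/-- Bob's marginal `κ_B(b|y)` (computed with Alice's input `2`). -/
def margB (d : ℕ) [NeZero d] (κ : ℕ → ℕ → ZMod d → ZMod d → ℝ) (y : ℕ) (b : ZMod d) : ℝ :=
  ∑ a : ZMod d, κ 2 y a b

/-- The factor `g^k_l(t) = κ(t, t+q_{2k-2}|k,k-1)·κ(t, t-q_{2k-1}|k,k) /
(κ_B(t+q_{2k-2}|k-1)·κ_A(t|k))`, set to `0` whenever a denominator marginal vanishes. -/
def gFun (d m : ℕ) [NeZero d] (κ : ℕ → ℕ → ZMod d → ZMod d → ℝ)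
    (l : Fin (2 * m - 2) → ZMod d) (k : ℕ) (t : ZMod d) : ℝ :=
  if margB d κ (k - 1) (t + qOf d m l (2 * k - 2)) = 0 ∨ margA d κ k t = 0 then 0
  else κ k (k - 1) t (t + qOf d m l (2 * k - 2)) * κ k k t (t - qOf d m l (2 * k - 1)) /
    (margB d κ (k - 1) (t + qOf d m l (2 * k - 2)) * margA d κ k t)

/-- `𝓕^i_l(t) = κ_B(t+q_2|1)·Π_{k=2}^i g^k_l(t - c_k)`. -/
def FFun (d m : ℕ) [NeZero d] (κ : ℕ → ℕ → ZMod d → ZMod d → ℝ)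
    (l : Fin (2 * m - 2) → ZMod d) (i : ℕ) (t : ZMod d) : ℝ :=
  margB d κ 1 (t + qOf d m l 2) *
    ∏ k ∈ Finset.Icc 2 i, gFun d m κ l k (t - cOf d m l k)

end


section Aux

variable {d m : ℕ} [NeZero d] {κ : ℕ → ℕ → ZMod d → ZMod d → ℝ}

lemma margA_eq (hm : 2 ≤ m)
    (hnsA : ∀ x y y', 2 ≤ x → x ≤ m → 1 ≤ y → y ≤ m → 1 ≤ y' → y' ≤ m → ∀ a,
      ∑ b : ZMod d, κ x y a b = ∑ b : ZMod d, κ x y' a b)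
    {x y : ℕ} (hx2 : 2 ≤ x) (hxm : x ≤ m) (hy1 : 1 ≤ y) (hym : y ≤ m) (a : ZMod d) :
    ∑ b : ZMod d, κ x y a b = margA d κ x a :=
  hnsA x y 1 hx2 hxm hy1 hym le_rfl (by omega) a

lemma margB_eq (hm : 2 ≤ m)
    (hnsB : ∀ x x' y, 2 ≤ x → x ≤ m → 2 ≤ x' → x' ≤ m → 1 ≤ y → y ≤ m → ∀ b,
      ∑ a : ZMod d, κ x y a b = ∑ a : ZMod d, κ x' y a b)
    {x y : ℕ} (hx2 : 2 ≤ x) (hxm : x ≤ m) (hy1 : 1 ≤ y) (hym : y ≤ m) (b : ZMod d) :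
    ∑ a : ZMod d, κ x y a b = margB d κ y b :=
  hnsB x 2 y hx2 hxm le_rfl hm hy1 hym b

lemma kappa_zero_A (hm : 2 ≤ m)
    (hpos : ∀ x y, 2 ≤ x → x ≤ m → 1 ≤ y → y ≤ m → ∀ a b, 0 ≤ κ x y a b)
    (hnsA : ∀ x y y', 2 ≤ x → x ≤ m → 1 ≤ y → y ≤ m → 1 ≤ y' → y' ≤ m → ∀ a,
      ∑ b : ZMod d, κ x y a b = ∑ b : ZMod d, κ x y' a b)
    {x y : ℕ} (hx2 : 2 ≤ x) (hxm : x ≤ m) (hy1 : 1 ≤ y) (hym : y ≤ m)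
    {a : ZMod d} (h : margA d κ x a = 0) (b : ZMod d) : κ x y a b = 0 := by
  have hs : ∑ b : ZMod d, κ x y a b = 0 := by
    rw [margA_eq hm hnsA hx2 hxm hy1 hym a, h]
  exact (Finset.sum_eq_zero_iff_of_nonneg
    (fun b _ => hpos x y hx2 hxm hy1 hym a b)).mp hs b (Finset.mem_univ b)

lemma kappa_zero_B (hm : 2 ≤ m)
    (hpos : ∀ x y, 2 ≤ x → x ≤ m → 1 ≤ y → y ≤ m → ∀ a b, 0 ≤ κ x y a b)
    (hnsB : ∀ x x' y, 2 ≤ x → x ≤ m → 2 ≤ x' → x' ≤ m → 1 ≤ y → y ≤ m → ∀ b,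
      ∑ a : ZMod d, κ x y a b = ∑ a : ZMod d, κ x' y a b)
    {x y : ℕ} (hx2 : 2 ≤ x) (hxm : x ≤ m) (hy1 : 1 ≤ y) (hym : y ≤ m)
    {b : ZMod d} (h : margB d κ y b = 0) (a : ZMod d) : κ x y a b = 0 := by
  have hs : ∑ a : ZMod d, κ x y a b = 0 := by
    rw [margB_eq hm hnsB hx2 hxm hy1 hym b, h]
  exact (Finset.sum_eq_zero_iff_of_nonneg
    (fun a _ => hpos x y hx2 hxm hy1 hym a b)).mp hs a (Finset.mem_univ a)

lemma core_sum (hm : 2 ≤ m)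
    (hpos : ∀ x y, 2 ≤ x → x ≤ m → 1 ≤ y → y ≤ m → ∀ a b, 0 ≤ κ x y a b)
    (hnsA : ∀ x y y', 2 ≤ x → x ≤ m → 1 ≤ y → y ≤ m → 1 ≤ y' → y' ≤ m → ∀ a,
      ∑ b : ZMod d, κ x y a b = ∑ b : ZMod d, κ x y' a b)
    (hnsB : ∀ x x' y, 2 ≤ x → x ≤ m → 2 ≤ x' → x' ≤ m → 1 ≤ y → y ≤ m → ∀ b,
      ∑ a : ZMod d, κ x y a b = ∑ a : ZMod d, κ x' y a b)
    {i : ℕ} (hi2 : 2 ≤ i) (him : i + 1 ≤ m) (s' : ZMod d) :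
    ∑ a : ZMod d, ∑ b : ZMod d,
      (if margB d κ i s' = 0 ∨ margA d κ (i + 1) (s' - a) = 0 then (0 : ℝ)
       else κ (i + 1) i (s' - a) s' * κ (i + 1) (i + 1) (s' - a) ((s' - a) - b) /
         (margB d κ i s' * margA d κ (i + 1) (s' - a)))
    = if margB d κ i s' = 0 then 0 else 1 := by
  by_cases hB : margB d κ i s' = 0
  · simp [hB]
  · rw [if_neg hB]
    have h1 : ∀ a : ZMod d,
        (∑ b : ZMod d, if margB d κ i s' = 0 ∨ margA d κ (i + 1) (s' - a) = 0 then (0 : ℝ)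
          else κ (i + 1) i (s' - a) s' * κ (i + 1) (i + 1) (s' - a) ((s' - a) - b) /
            (margB d κ i s' * margA d κ (i + 1) (s' - a)))
        = κ (i + 1) i (s' - a) s' / margB d κ i s' := by
      intro a
      by_cases hA : margA d κ (i + 1) (s' - a) = 0
      · rw [kappa_zero_A hm hpos hnsA (by omega) him (by omega) (by omega) hA s', zero_div]
        simp [hA]
      · have hb : ∀ b : ZMod d,
            (if margB d κ i s' = 0 ∨ margA d κ (i + 1) (s' - a) = 0 then (0 : ℝ)
             else κ (i + 1) i (s' - a) s' * κ (i + 1) (i + 1) (s' - a) ((s' - a) - b) /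
               (margB d κ i s' * margA d κ (i + 1) (s' - a)))
            = κ (i + 1) i (s' - a) s' * κ (i + 1) (i + 1) (s' - a) ((s' - a) - b) /
               (margB d κ i s' * margA d κ (i + 1) (s' - a)) :=
          fun b => if_neg (by tauto)
        have hsum : ∑ b : ZMod d, κ (i + 1) (i + 1) (s' - a) ((s' - a) - b)
            = margA d κ (i + 1) (s' - a) := by
          rw [Fintype.sum_equiv (Equiv.subLeft (s' - a))
            (fun b => κ (i + 1) (i + 1) (s' - a) ((s' - a) - b))
            (fun b => κ (i + 1) (i + 1) (s' - a) b) (fun b => rfl)]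
          exact margA_eq hm hnsA (by omega) him (by omega) him (s' - a)
        rw [Finset.sum_congr rfl (fun b _ => hb b)]
        rw [← Finset.sum_div, ← Finset.mul_sum, hsum]
        field_simp
    rw [Finset.sum_congr rfl (fun a _ => h1 a), ← Finset.sum_div]
    have hsum2 : ∑ a : ZMod d, κ (i + 1) i (s' - a) s' = margB d κ i s' := by
      rw [Fintype.sum_equiv (Equiv.subLeft s')
        (fun a => κ (i + 1) i (s' - a) s') (fun a => κ (i + 1) i a s') (fun a => rfl)]
      exact margB_eq hm hnsB (by omega) him (by omega) (by omega) s'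
    rw [hsum2, div_self hB]

end Aux

/-- the telescoping identity
`Σ_{q_{2i},...,q_{2m-1}} 𝓕^m_l(t) = 𝓕^i_l(t)` for all `t`, `l`, `2 ≤ i ≤ m`.
The sum over `q_{2i},...,q_{2m-1}` is expressed as a sum over tuples `l'` agreeing
with `l` on the coordinates `q_2, ..., q_{2i-1}`. -/
theorem FFun_telescoping
    (d m : ℕ) [NeZero d] (hd : 2 ≤ d) (hm : 2 ≤ m)
    (κ : ℕ → ℕ → ZMod d → ZMod d → ℝ)
    (hpos : ∀ x y, 2 ≤ x → x ≤ m → 1 ≤ y → y ≤ m → ∀ a b, 0 ≤ κ x y a b)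
    (hnorm : ∀ x y, 2 ≤ x → x ≤ m → 1 ≤ y → y ≤ m →
      ∑ a : ZMod d, ∑ b : ZMod d, κ x y a b = 1)
    (hnsA : ∀ x y y', 2 ≤ x → x ≤ m → 1 ≤ y → y ≤ m → 1 ≤ y' → y' ≤ m → ∀ a,
      ∑ b : ZMod d, κ x y a b = ∑ b : ZMod d, κ x y' a b)
    (hnsB : ∀ x x' y, 2 ≤ x → x ≤ m → 2 ≤ x' → x' ≤ m → 1 ≤ y → y ≤ m → ∀ b,
      ∑ a : ZMod d, κ x y a b = ∑ a : ZMod d, κ x' y a b) :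
    ∀ (l : Fin (2 * m - 2) → ZMod d) (t : ZMod d) (i : ℕ), 2 ≤ i → i ≤ m →
      ∑ l' ∈ Finset.univ.filter (fun l' : Fin (2 * m - 2) → ZMod d =>
          ∀ j : Fin (2 * m - 2), (j : ℕ) + 2 < 2 * i → l' j = l j),
        FFun d m κ l' m t = FFun d m κ l i t := by
  suffices H : ∀ n : ℕ, ∀ i : ℕ, 2 ≤ i → i ≤ m → m - i = n →
      ∀ (l : Fin (2 * m - 2) → ZMod d) (t : ZMod d),
      ∑ l' ∈ Finset.univ.filter (fun l' : Fin (2 * m - 2) → ZMod d =>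
          ∀ j : Fin (2 * m - 2), (j : ℕ) + 2 < 2 * i → l' j = l j),
        FFun d m κ l' m t = FFun d m κ l i t by
    intro l t i hi2 him
    exact H (m - i) i hi2 him rfl l t
  intro n
  induction n with
  | zero =>
    intro i hi2 him hmi l t
    have hieq : m = i := by omega
    subst hieq
    have hset : (Finset.univ.filter (fun l' : Fin (2 * m - 2) → ZMod d =>
        ∀ j : Fin (2 * m - 2), (j : ℕ) + 2 < 2 * m → l' j = l j)) = {l} := by
      ext l'
      simp only [Finset.mem_filter, Finset.mem_univ, true_and, Finset.mem_singleton]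
      constructor
      · intro h
        funext j
        exact h j (by have := j.2; omega)
      · intro h j _
        rw [h]
    rw [hset, Finset.sum_singleton]
  | succ n ih =>
    intro i hi2 him hmi l t
    have hilt : i < m := by omega
    have hv1 : 2 * i - 2 < 2 * m - 2 := by omega
    have hv2 : 2 * i - 1 < 2 * m - 2 := by omega
    set e1 : Fin (2 * m - 2) := ⟨2 * i - 2, hv1⟩ with he1
    set e2 : Fin (2 * m - 2) := ⟨2 * i - 1, hv2⟩ with he2
    have hne12 : e1 ≠ e2 := by
      apply Fin.ne_of_val_ne
      show 2 * i - 2 ≠ 2 * i - 1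
      omega
    set lab : ZMod d → ZMod d → Fin (2 * m - 2) → ZMod d :=
      fun a b => Function.update (Function.update l e1 a) e2 b with hlab
    -- values of lab
    have hlab1 : ∀ a b, lab a b e1 = a := by
      intro a b
      show Function.update (Function.update l e1 a) e2 b e1 = a
      rw [Function.update_of_ne hne12, Function.update_self]
    have hlab2 : ∀ a b, lab a b e2 = b := by
      intro a b
      show Function.update (Function.update l e1 a) e2 b e2 = b
      rw [Function.update_self]
    have hlabo : ∀ a b (j : Fin (2 * m - 2)), j ≠ e1 → j ≠ e2 → lab a b j = l j := by
      intro a b j hj1 hj2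
      show Function.update (Function.update l e1 a) e2 b j = l j
      rw [Function.update_of_ne hj2, Function.update_of_ne hj1]
    have hqlt : ∀ (a b : ZMod d) (j : ℕ), j < 2 * i →
        qOf d m (lab a b) j = qOf d m l j := by
      intro a b j hj
      unfold qOf
      split
      · next h =>
        exact hlabo a b _ (Fin.ne_of_val_ne (show j - 2 ≠ 2 * i - 2 by omega))
          (Fin.ne_of_val_ne (show j - 2 ≠ 2 * i - 1 by omega))
      · rfl
    have hclt : ∀ (a b : ZMod d) (k : ℕ), k ≤ i →
        cOf d m (lab a b) k = cOf d m l k := by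
      intro a b k hk
      unfold cOf
      refine Finset.sum_congr rfl (fun j hj => ?_)
      rw [Finset.mem_Icc] at hj
      exact hqlt a b j (by omega)
    have hglt : ∀ (a b : ZMod d) (k : ℕ), 2 ≤ k → k ≤ i → ∀ s : ZMod d,
        gFun d m κ (lab a b) k s = gFun d m κ l k s := by
      intro a b k hk2 hki s
      unfold gFun
      rw [hqlt a b (2 * k - 2) (by omega), hqlt a b (2 * k - 1) (by omega)]
    have hq2i : ∀ a b : ZMod d, qOf d m (lab a b) (2 * (i + 1) - 2) = a := by
      intro a b
      unfold qOf
      rw [dif_pos (show 2 * (i + 1) - 2 - 2 < 2 * m - 2 by omega)]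
      have : (⟨2 * (i + 1) - 2 - 2, by omega⟩ : Fin (2 * m - 2)) = e1 := by
        apply Fin.ext
        show 2 * (i + 1) - 2 - 2 = 2 * i - 2
        omega
      rw [this, hlab1]
    have hq2i1 : ∀ a b : ZMod d, qOf d m (lab a b) (2 * (i + 1) - 1) = b := by
      intro a b
      unfold qOf
      rw [dif_pos (show 2 * (i + 1) - 1 - 2 < 2 * m - 2 by omega)]
      have : (⟨2 * (i + 1) - 1 - 2, by omega⟩ : Fin (2 * m - 2)) = e2 := by
        apply Fin.ext
        show 2 * (i + 1) - 1 - 2 = 2 * i - 1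
        omega
      rw [this, hlab2]
    have hci : ∀ a b : ZMod d,
        cOf d m (lab a b) (i + 1) = cOf d m l i + qOf d m l (2 * i - 1) + a := by
      intro a b
      unfold cOf
      rw [show (2 * (i + 1) - 2) = (2 * i - 1) + 1 by omega,
        Finset.sum_Icc_succ_top (by omega : 3 ≤ (2 * i - 1) + 1)]
      rw [show (2 * i - 1 : ℕ) = (2 * i - 2) + 1 by omega,
        Finset.sum_Icc_succ_top (by omega : 3 ≤ (2 * i - 2) + 1)]
      congr 1
      · congr 1
        · exact Finset.sum_congr rfl (fun j hj => by
            rw [Finset.mem_Icc] at hj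
            exact hqlt a b j (by omega))
        · exact hqlt a b ((2 * i - 2) + 1) (by omega)
      · have h2 : ((2 * i - 2) + 1 + 1 : ℕ) = 2 * (i + 1) - 2 := by omega
        rw [h2]
        exact hq2i a b
    set s' : ZMod d := t - cOf d m l i - qOf d m l (2 * i - 1) with hs'
    have hg : ∀ a b : ZMod d,
        gFun d m κ (lab a b) (i + 1) (t - cOf d m (lab a b) (i + 1))
        = (if margB d κ i s' = 0 ∨ margA d κ (i + 1) (s' - a) = 0 then (0 : ℝ)
           else κ (i + 1) i (s' - a) s' * κ (i + 1) (i + 1) (s' - a) ((s' - a) - b) /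
             (margB d κ i s' * margA d κ (i + 1) (s' - a))) := by
      intro a b
      rw [hci a b]
      have harg : t - (cOf d m l i + qOf d m l (2 * i - 1) + a) = s' - a := by
        rw [hs']; ring
      rw [harg]
      unfold gFun
      rw [hq2i a b, hq2i1 a b]
      have hii : (i + 1 - 1 : ℕ) = i := by omega
      rw [hii]
      have hspa : s' - a + a = s' := by ring
      rw [hspa]
    have hFF : ∀ a b : ZMod d,
        FFun d m κ (lab a b) (i + 1) t
        = FFun d m κ l i t *
          (if margB d κ i s' = 0 ∨ margA d κ (i + 1) (s' - a) = 0 then (0 : ℝ)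
           else κ (i + 1) i (s' - a) s' * κ (i + 1) (i + 1) (s' - a) ((s' - a) - b) /
             (margB d κ i s' * margA d κ (i + 1) (s' - a))) := by
      intro a b
      have hprod : ∏ k ∈ Finset.Icc 2 i, gFun d m κ (lab a b) k (t - cOf d m (lab a b) k)
          = ∏ k ∈ Finset.Icc 2 i, gFun d m κ l k (t - cOf d m l k) :=
        Finset.prod_congr rfl (fun k hk => by
          rw [Finset.mem_Icc] at hk
          rw [hclt a b k hk.2, hglt a b k hk.1 hk.2])
      unfold FFun
      rw [Finset.prod_Icc_succ_top (by omega : 2 ≤ i + 1), hg a b, hqlt a b 2 (by omega),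
        hprod]
      exact (mul_assoc _ _ _).symm
    -- fiberwise decomposition
    rw [← Finset.sum_fiberwise_of_maps_to (t := (Finset.univ : Finset (ZMod d × ZMod d)))
      (g := fun l' : Fin (2 * m - 2) → ZMod d => (l' e1, l' e2))
      (fun x _ => Finset.mem_univ _) (fun l' => FFun d m κ l' m t)]
    rw [Fintype.sum_prod_type]
    have key : ∀ a b : ZMod d,
        (∑ l' ∈ Finset.filter (fun l' => (l' e1, l' e2) = (a, b))
            (Finset.univ.filter fun l' : Fin (2 * m - 2) → ZMod d =>
              ∀ j : Fin (2 * m - 2), (j : ℕ) + 2 < 2 * i → l' j = l j),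
          FFun d m κ l' m t)
        = FFun d m κ (lab a b) (i + 1) t := by
      intro a b
      rw [Finset.filter_filter]
      have hset : (Finset.univ.filter (fun l' : Fin (2 * m - 2) → ZMod d =>
          (∀ j : Fin (2 * m - 2), (j : ℕ) + 2 < 2 * i → l' j = l j) ∧ (l' e1, l' e2) = (a, b)))
          = Finset.univ.filter (fun l' : Fin (2 * m - 2) → ZMod d =>
              ∀ j : Fin (2 * m - 2), (j : ℕ) + 2 < 2 * (i + 1) → l' j = lab a b j) := by
        ext l'
        simp only [Finset.mem_filter, Finset.mem_univ, true_and, Prod.mk.injEq]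
        constructor
        · rintro ⟨hpre, hh1, hh2⟩ j hj
          rcases eq_or_ne (j : ℕ) (2 * i - 2) with hvv | hvv
          · have hje : j = e1 := Fin.ext hvv
            rw [hje, hh1, hlab1]
          · rcases eq_or_ne (j : ℕ) (2 * i - 1) with hvv2 | hvv2
            · have hje : j = e2 := Fin.ext hvv2
              rw [hje, hh2, hlab2]
            · rw [hpre j (by omega), hlabo a b j (Fin.ne_of_val_ne hvv)
                (Fin.ne_of_val_ne hvv2)]
        · intro h
          refine ⟨fun j hj => ?_, ?_, ?_⟩
          · rw [h j (by omega), hlabo a b j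
              (Fin.ne_of_val_ne (show (j : ℕ) ≠ 2 * i - 2 by omega))
              (Fin.ne_of_val_ne (show (j : ℕ) ≠ 2 * i - 1 by omega))]
          · rw [h e1 (by show 2 * i - 2 + 2 < 2 * (i + 1); omega), hlab1]
          · rw [h e2 (by show 2 * i - 1 + 2 < 2 * (i + 1); omega), hlab2]
      rw [hset]
      exact ih (i + 1) (by omega) (by omega) (by omega) (lab a b) t
    rw [Finset.sum_congr rfl (fun a _ => Finset.sum_congr rfl (fun b _ => by
      rw [key a b, hFF a b]))]
    simp_rw [← Finset.mul_sum]
    rw [core_sum hm hpos hnsA hnsB hi2 (by omega) s']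
    by_cases hB : margB d κ i s' = 0
    · rw [if_pos hB, mul_zero]
      symm
      unfold FFun
      have hgz : gFun d m κ l i (t - cOf d m l i) = 0 := by
        unfold gFun
        split
        · rfl
        · next hcond =>
          rw [kappa_zero_B hm hpos hnsB hi2 (by omega) (by omega) (by omega) hB
            (t - cOf d m l i), mul_zero, zero_div]
      rw [Finset.prod_eq_zero (Finset.mem_Icc.mpr ⟨hi2, le_rfl⟩ : i ∈ Finset.Icc 2 i) hgz,
        mul_zero]
    · rw [if_neg hB, mul_one]
end

section
/- With 𝓕^i_l as above, for all t ∈ ℤ_d, all l ∈ ℤ_d^{2m-2}, and all 3 ≤ i ≤ m: Σ over q_2,...,q_{2i-3} ∈ ℤ_d of 𝓕^i_l(t + c_i) = κ_B(t + q_{2i-2} | i-1)·g^i_l(t). -/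
open scoped BigOperators

-- auxiliary defs
noncomputable section MyAux

def Sset (d m : ℕ) [NeZero d] (n : ℕ) (l : Fin (2 * m - 2) → ZMod d) :
    Finset (Fin (2 * m - 2) → ZMod d) :=
  Finset.univ.filter (fun l' => ∀ j : Fin (2 * m - 2), n ≤ (j : ℕ) → l' j = l j)

lemma Sset_zero (d m : ℕ) [NeZero d] (l : Fin (2 * m - 2) → ZMod d) : Sset d m 0 l = {l} := by
  ext l'
  simp only [Sset, Finset.mem_filter, Finset.mem_univ, true_and, Finset.mem_singleton]
  constructor
  · intro h; funext j; exact h j (Nat.zero_le _)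
  · intro h j _; rw [h]

lemma Sset_succ_sum (d m : ℕ) [NeZero d] (n : ℕ) (hn : n < 2 * m - 2)
    (l : Fin (2 * m - 2) → ZMod d) (f : (Fin (2 * m - 2) → ZMod d) → ℝ) :
    ∑ l' ∈ Sset d m (n + 1) l, f l' =
    ∑ x : ZMod d, ∑ l' ∈ Sset d m n (Function.update l ⟨n, hn⟩ x), f l' := by
  rw [← Finset.sum_fiberwise (Sset d m (n + 1) l) (fun l' => l' ⟨n, hn⟩) f]
  apply Finset.sum_congr rfl
  intro x _
  apply Finset.sum_congr _ (fun _ _ => rfl)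
  ext l'
  simp only [Sset, Finset.mem_filter, Finset.mem_univ, true_and]
  constructor
  · rintro ⟨h1, h2⟩
    intro j hj
    rcases eq_or_lt_of_le hj with h | h
    · have hje : j = ⟨n, hn⟩ := Fin.ext h.symm
      rw [hje, Function.update_self]
      exact h2
    · rw [Function.update_of_ne (Fin.ne_of_val_ne (show (j : ℕ) ≠ n by omega))]
      exact h1 j h
  · intro h
    constructor
    · intro j hj
      have h2 := h j (by omega)
      rwa [Function.update_of_ne (Fin.ne_of_val_ne (show (j : ℕ) ≠ n by omega))] at h2
    · have h2 := h ⟨n, hn⟩ le_rfl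
      rwa [Function.update_self] at h2

lemma qOf_update (d m : ℕ) (l : Fin (2 * m - 2) → ZMod d) (j : Fin (2 * m - 2))
    (x : ZMod d) (i : ℕ) :
    qOf d m (Function.update l j x) i = if i - 2 = (j : ℕ) then x else qOf d m l i := by
  unfold qOf
  by_cases h1 : i - 2 < 2 * m - 2
  · rw [dif_pos h1, dif_pos h1]
    by_cases h2 : i - 2 = (j : ℕ)
    · have hje : (⟨i - 2, h1⟩ : Fin (2 * m - 2)) = j := Fin.ext h2
      rw [if_pos h2, hje, Function.update_self]
    · rw [if_neg h2, Function.update_of_ne (by intro he; exact h2 (congrArg Fin.val he))]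
  · rw [dif_neg h1, dif_neg h1, if_neg (by intro h2; rw [h2] at h1; exact h1 j.isLt)]

lemma qOf_eq_of_mem (d m : ℕ) [NeZero d] {n : ℕ} {l l' : Fin (2 * m - 2) → ZMod d}
    (h : l' ∈ Sset d m n l) {i : ℕ} (hi : n ≤ i - 2) : qOf d m l' i = qOf d m l i := by
  unfold qOf
  by_cases h1 : i - 2 < 2 * m - 2
  · rw [dif_pos h1, dif_pos h1]
    exact (Finset.mem_filter.mp h).2 ⟨i - 2, h1⟩ hi
  · rw [dif_neg h1, dif_neg h1]

lemma cOf_two (d m : ℕ) (l : Fin (2 * m - 2) → ZMod d) : cOf d m l 2 = 0 := by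
  unfold cOf
  rw [show 2 * 2 - 2 = 2 from rfl, Finset.Icc_eq_empty (by omega), Finset.sum_empty]

lemma cOf_succ (d m : ℕ) (l : Fin (2 * m - 2) → ZMod d) (i : ℕ) (hi : 2 ≤ i) :
    cOf d m l (i + 1) = cOf d m l i + qOf d m l (2 * i - 1) + qOf d m l (2 * i) := by
  have h1 : 2 * (i + 1) - 2 = (2 * i - 2) + 1 + 1 := by omega
  have h2 : 2 * i - 2 + 1 = 2 * i - 1 := by omega
  have h3 : 2 * i - 2 + 1 + 1 = 2 * i := by omega
  unfold cOf
  rw [h1, Finset.sum_Icc_succ_top (by omega), Finset.sum_Icc_succ_top (by omega), h3, h2]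

lemma gFun_congr (d m : ℕ) [NeZero d] (κ : ℕ → ℕ → ZMod d → ZMod d → ℝ)
    (l1 l2 : Fin (2 * m - 2) → ZMod d) (k : ℕ) (t : ZMod d)
    (h1 : qOf d m l1 (2 * k - 2) = qOf d m l2 (2 * k - 2))
    (h2 : qOf d m l1 (2 * k - 1) = qOf d m l2 (2 * k - 1)) :
    gFun d m κ l1 k t = gFun d m κ l2 k t := by
  unfold gFun; rw [h1, h2]

end MyAux

section AnalAux
variable (d m : ℕ) [NeZero d] (κ : ℕ → ℕ → ZMod d → ZMod d → ℝ)

lemma sumA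
    (hpos : ∀ x y, 2 ≤ x → x ≤ m → 1 ≤ y → y ≤ m → ∀ a b, 0 ≤ κ x y a b)
    (hnsA : ∀ x y y', 2 ≤ x → x ≤ m → 1 ≤ y → y ≤ m → 1 ≤ y' → y' ≤ m → ∀ a,
      ∑ b : ZMod d, κ x y a b = ∑ b : ZMod d, κ x y' a b)
    (hnsB : ∀ x x' y, 2 ≤ x → x ≤ m → 2 ≤ x' → x' ≤ m → 1 ≤ y → y ≤ m → ∀ b,
      ∑ a : ZMod d, κ x y a b = ∑ a : ZMod d, κ x' y a b)
    (k : ℕ) (hk2 : 2 ≤ k) (hkm : k ≤ m) (s r : ZMod d) :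
    ∑ q : ZMod d, margB d κ (k - 1) (s + q) *
      (if margB d κ (k - 1) (s + q) = 0 ∨ margA d κ k s = 0 then 0
       else κ k (k - 1) s (s + q) * κ k k s (s - r) /
         (margB d κ (k - 1) (s + q) * margA d κ k s)) = κ k k s (s - r) := by
  have hm2 : 2 ≤ m := hk2.trans hkm
  have hm1 : 1 ≤ m := by omega
  have hk1 : 1 ≤ k - 1 := by omega
  have hk1m : k - 1 ≤ m := by omega
  have hA : margA d κ k s = ∑ b : ZMod d, κ k (k - 1) s b :=
    (hnsA k (k - 1) 1 hk2 hkm hk1 hk1m le_rfl hm1 s).symm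
  have hAkk : ∑ b : ZMod d, κ k k s b = margA d κ k s :=
    hnsA k k 1 hk2 hkm (by omega) hkm le_rfl hm1 s
  have hB : ∀ b, margB d κ (k - 1) b = ∑ a : ZMod d, κ k (k - 1) a b := fun b =>
    hnsB 2 k (k - 1) le_rfl hm2 hk2 hkm hk1 hk1m b
  by_cases hA0 : margA d κ k s = 0
  · have hz : κ k k s (s - r) = 0 := by
      have h0 : ∑ b : ZMod d, κ k k s b = 0 := by rw [hAkk, hA0]
      exact (Finset.sum_eq_zero_iff_of_nonneg
        (fun b _ => hpos k k hk2 hkm (by omega) hkm s b)).mp h0 (s - r) (Finset.mem_univ _)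
    rw [hz]
    apply Finset.sum_eq_zero
    intro q _
    rw [if_pos (Or.inr hA0), mul_zero]
  · have key : ∀ q : ZMod d, margB d κ (k - 1) (s + q) *
        (if margB d κ (k - 1) (s + q) = 0 ∨ margA d κ k s = 0 then 0
         else κ k (k - 1) s (s + q) * κ k k s (s - r) /
           (margB d κ (k - 1) (s + q) * margA d κ k s)) =
        κ k (k - 1) s (s + q) * (κ k k s (s - r) / margA d κ k s) := by
      intro q
      by_cases hB0 : margB d κ (k - 1) (s + q) = 0
      · have h0 : ∑ a : ZMod d, κ k (k - 1) a (s + q) = 0 := by rw [← hB (s + q)]; exact hB0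
        have hz2 : κ k (k - 1) s (s + q) = 0 :=
          (Finset.sum_eq_zero_iff_of_nonneg
            (fun a _ => hpos k (k - 1) hk2 hkm hk1 hk1m a (s + q))).mp h0 s (Finset.mem_univ _)
        rw [if_pos (Or.inl hB0), mul_zero, hz2, zero_mul]
      · rw [if_neg (by tauto)]
        field_simp
    rw [Finset.sum_congr rfl fun q _ => key q, ← Finset.sum_mul]
    have hre : ∑ q : ZMod d, κ k (k - 1) s (s + q) = ∑ b : ZMod d, κ k (k - 1) s b :=
      Fintype.sum_equiv (Equiv.addLeft s) _ _ (fun q => rfl)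
    rw [hre, ← hA, mul_comm, div_mul_cancel₀ _ hA0]

lemma sumB
    (hnsB : ∀ x x' y, 2 ≤ x → x ≤ m → 2 ≤ x' → x' ≤ m → 1 ≤ y → y ≤ m → ∀ b,
      ∑ a : ZMod d, κ x y a b = ∑ a : ZMod d, κ x' y a b)
    (k : ℕ) (hk2 : 2 ≤ k) (hkm : k ≤ m) (u : ZMod d) :
    ∑ y : ZMod d, κ k k (u + y) u = margB d κ k u := by
  have h : margB d κ k u = ∑ a : ZMod d, κ k k a u :=
    hnsB 2 k k le_rfl (hk2.trans hkm) hk2 hkm (by omega) hkm u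
  rw [h]
  exact Fintype.sum_equiv (Equiv.addLeft u) _ _ (fun y => rfl)

end AnalAux

section MainAux
variable (d m : ℕ) [NeZero d] (κ : ℕ → ℕ → ZMod d → ZMod d → ℝ)

lemma Sset_succ_sum' (n n' : ℕ) (h : n' = n + 1) (hn : n < 2 * m - 2)
    (l : Fin (2 * m - 2) → ZMod d) (f : (Fin (2 * m - 2) → ZMod d) → ℝ) :
    ∑ l' ∈ Sset d m n' l, f l' =
    ∑ x : ZMod d, ∑ l' ∈ Sset d m n (Function.update l ⟨n, hn⟩ x), f l' := by
  subst h; exact Sset_succ_sum d m n hn l f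

lemma Qlem
    (hpos : ∀ x y, 2 ≤ x → x ≤ m → 1 ≤ y → y ≤ m → ∀ a b, 0 ≤ κ x y a b)
    (hnsA : ∀ x y y', 2 ≤ x → x ≤ m → 1 ≤ y → y ≤ m → 1 ≤ y' → y' ≤ m → ∀ a,
      ∑ b : ZMod d, κ x y a b = ∑ b : ZMod d, κ x y' a b)
    (hnsB : ∀ x x' y, 2 ≤ x → x ≤ m → 2 ≤ x' → x' ≤ m → 1 ≤ y → y ≤ m → ∀ b,
      ∑ a : ZMod d, κ x y a b = ∑ a : ZMod d, κ x' y a b) :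
    ∀ i, 2 ≤ i → i ≤ m → ∀ (l : Fin (2 * m - 2) → ZMod d) (t : ZMod d),
      ∑ l' ∈ Sset d m (2 * i - 4) l, FFun d m κ l' i (t + cOf d m l' i) =
      margB d κ (i - 1) (t + qOf d m l (2 * i - 2)) * gFun d m κ l i t := by
  intro i hi2
  induction i, hi2 using Nat.le_induction with
  | base =>
    intro _ l t
    rw [show 2 * 2 - 4 = 0 by norm_num, Sset_zero, Finset.sum_singleton, cOf_two, add_zero]
    unfold FFun
    rw [Finset.Icc_self, Finset.prod_singleton, cOf_two, sub_zero]
  | succ i hi2 ih =>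
    intro him l t
    have hiM : i ≤ m := by omega
    have hlt1 : 2 * i - 3 < 2 * m - 2 := by omega
    have hlt2 : 2 * i - 4 < 2 * m - 2 := by omega
    have main : ∀ y : ZMod d,
        (∑ l' ∈ Sset d m (2 * i - 3) (Function.update l ⟨2 * i - 3, hlt1⟩ y),
          FFun d m κ l' (i + 1) (t + cOf d m l' (i + 1))) =
        κ i i (t + qOf d m l (2 * i) + y) (t + qOf d m l (2 * i)) *
          gFun d m κ l (i + 1) t := by
      intro y
      set l1 := Function.update l ⟨2 * i - 3, hlt1⟩ y with hl1
      have hq1 : ∀ x : ZMod d,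
          qOf d m (Function.update l1 ⟨2 * i - 4, hlt2⟩ x) (2 * i - 1) = y := by
        intro x
        rw [qOf_update, if_neg (show ¬(2 * i - 1 - 2 = 2 * i - 4) by omega), hl1,
          qOf_update, if_pos (show 2 * i - 1 - 2 = 2 * i - 3 by omega)]
      have hq2 : ∀ x : ZMod d,
          qOf d m (Function.update l1 ⟨2 * i - 4, hlt2⟩ x) (2 * i) = qOf d m l (2 * i) := by
        intro x
        rw [qOf_update, if_neg (show ¬(2 * i - 2 = 2 * i - 4) by omega), hl1,
          qOf_update, if_neg (show ¬(2 * i - 2 = 2 * i - 3) by omega)]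
      have hq3 : ∀ x : ZMod d,
          qOf d m (Function.update l1 ⟨2 * i - 4, hlt2⟩ x) (2 * i + 1) =
          qOf d m l (2 * i + 1) := by
        intro x
        rw [qOf_update, if_neg (show ¬(2 * i + 1 - 2 = 2 * i - 4) by omega), hl1,
          qOf_update, if_neg (show ¬(2 * i + 1 - 2 = 2 * i - 3) by omega)]
      have hx : ∀ x : ZMod d,
          qOf d m (Function.update l1 ⟨2 * i - 4, hlt2⟩ x) (2 * i - 2) = x := by
        intro x
        rw [qOf_update, if_pos (show 2 * i - 2 - 2 = 2 * i - 4 by omega)]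
      have key : ∀ x : ZMod d, ∀ l' ∈ Sset d m (2 * i - 4)
          (Function.update l1 ⟨2 * i - 4, hlt2⟩ x),
          FFun d m κ l' (i + 1) (t + cOf d m l' (i + 1)) =
          FFun d m κ l' i (t + y + qOf d m l (2 * i) + cOf d m l' i) *
            gFun d m κ l (i + 1) t := by
        intro x l' hl'
        have hq1' : qOf d m l' (2 * i - 1) = y :=
          (qOf_eq_of_mem d m hl' (show 2 * i - 4 ≤ 2 * i - 1 - 2 by omega)).trans (hq1 x)
        have hq2' : qOf d m l' (2 * i) = qOf d m l (2 * i) :=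
          (qOf_eq_of_mem d m hl' (show 2 * i - 4 ≤ 2 * i - 2 by omega)).trans (hq2 x)
        have hq3' : qOf d m l' (2 * i + 1) = qOf d m l (2 * i + 1) :=
          (qOf_eq_of_mem d m hl' (show 2 * i - 4 ≤ 2 * i + 1 - 2 by omega)).trans (hq3 x)
        have hc : cOf d m l' (i + 1) = cOf d m l' i + y + qOf d m l (2 * i) := by
          rw [cOf_succ d m l' i hi2, hq1', hq2']
        have hg1 : qOf d m l' (2 * (i + 1) - 2) = qOf d m l (2 * (i + 1) - 2) := by
          rw [show 2 * (i + 1) - 2 = 2 * i by omega]; exact hq2'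
        have hg2 : qOf d m l' (2 * (i + 1) - 1) = qOf d m l (2 * (i + 1) - 1) := by
          rw [show 2 * (i + 1) - 1 = 2 * i + 1 by omega]; exact hq3'
        have hsplit : FFun d m κ l' (i + 1) (t + cOf d m l' (i + 1)) =
            FFun d m κ l' i (t + cOf d m l' (i + 1)) *
              gFun d m κ l' (i + 1)
                (t + cOf d m l' (i + 1) - cOf d m l' (i + 1)) := by
          unfold FFun
          rw [Finset.prod_Icc_succ_top (show 2 ≤ i + 1 by omega)]
          ring
        have harg : t + cOf d m l' (i + 1) = t + y + qOf d m l (2 * i) + cOf d m l' i := by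
          rw [hc]; ring
        rw [hsplit, add_sub_cancel_right, harg,
          gFun_congr d m κ l' l (i + 1) t hg1 hg2]
      have inner : ∀ x : ZMod d,
          (∑ l' ∈ Sset d m (2 * i - 4) (Function.update l1 ⟨2 * i - 4, hlt2⟩ x),
            FFun d m κ l' (i + 1) (t + cOf d m l' (i + 1))) =
          margB d κ (i - 1) (t + y + qOf d m l (2 * i) + x) *
            (if margB d κ (i - 1) (t + y + qOf d m l (2 * i) + x) = 0 ∨
                margA d κ i (t + y + qOf d m l (2 * i)) = 0 then 0
             else κ i (i - 1) (t + y + qOf d m l (2 * i))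
                 (t + y + qOf d m l (2 * i) + x) *
               κ i i (t + y + qOf d m l (2 * i)) (t + y + qOf d m l (2 * i) - y) /
               (margB d κ (i - 1) (t + y + qOf d m l (2 * i) + x) *
                 margA d κ i (t + y + qOf d m l (2 * i)))) *
            gFun d m κ l (i + 1) t := by
        intro x
        have hgf : gFun d m κ (Function.update l1 ⟨2 * i - 4, hlt2⟩ x) i
            (t + y + qOf d m l (2 * i)) =
            (if margB d κ (i - 1) (t + y + qOf d m l (2 * i) + x) = 0 ∨
                margA d κ i (t + y + qOf d m l (2 * i)) = 0 then 0
             else κ i (i - 1) (t + y + qOf d m l (2 * i))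
                 (t + y + qOf d m l (2 * i) + x) *
               κ i i (t + y + qOf d m l (2 * i)) (t + y + qOf d m l (2 * i) - y) /
               (margB d κ (i - 1) (t + y + qOf d m l (2 * i) + x) *
                 margA d κ i (t + y + qOf d m l (2 * i)))) := by
          unfold gFun
          rw [hx x, hq1 x]
        rw [Finset.sum_congr rfl (key x), ← Finset.sum_mul,
          ih hiM _ (t + y + qOf d m l (2 * i)), hx x, hgf]
      rw [Sset_succ_sum' d m (2 * i - 4) (2 * i - 3) (by omega) hlt2,
        Finset.sum_congr rfl fun x _ => inner x, ← Finset.sum_mul,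
        sumA d m κ hpos hnsA hnsB i hi2 hiM (t + y + qOf d m l (2 * i)) y,
        show t + y + qOf d m l (2 * i) - y = t + qOf d m l (2 * i) by ring,
        show t + y + qOf d m l (2 * i) = t + qOf d m l (2 * i) + y by ring]
    rw [Sset_succ_sum' d m (2 * i - 3) (2 * (i + 1) - 4) (by omega) hlt1 l,
      Finset.sum_congr rfl fun y _ => main y, ← Finset.sum_mul,
      sumB d m κ hnsB i hi2 hiM (t + qOf d m l (2 * i)),
      Nat.add_sub_cancel, show 2 * (i + 1) - 2 = 2 * i by omega]

end MainAux



/-- for all `t`, `l` and `3 ≤ i ≤ m`,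
`Σ_{q_2,...,q_{2i-3}} 𝓕^i_l(t + c_i) = κ_B(t + q_{2i-2}|i-1)·g^i_l(t)`.
The sum over `q_2, ..., q_{2i-3}` is expressed as a sum over tuples `l'` agreeing with
`l` on the coordinates `q_{2i-2}, ..., q_{2m-1}`. -/
theorem FFun_partial_sum
    (d m : ℕ) [NeZero d] (hd : 2 ≤ d) (hm : 2 ≤ m)
    (κ : ℕ → ℕ → ZMod d → ZMod d → ℝ)
    (hpos : ∀ x y, 2 ≤ x → x ≤ m → 1 ≤ y → y ≤ m → ∀ a b, 0 ≤ κ x y a b)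
    (hnorm : ∀ x y, 2 ≤ x → x ≤ m → 1 ≤ y → y ≤ m →
      ∑ a : ZMod d, ∑ b : ZMod d, κ x y a b = 1)
    (hnsA : ∀ x y y', 2 ≤ x → x ≤ m → 1 ≤ y → y ≤ m → 1 ≤ y' → y' ≤ m → ∀ a,
      ∑ b : ZMod d, κ x y a b = ∑ b : ZMod d, κ x y' a b)
    (hnsB : ∀ x x' y, 2 ≤ x → x ≤ m → 2 ≤ x' → x' ≤ m → 1 ≤ y → y ≤ m → ∀ b,
      ∑ a : ZMod d, κ x y a b = ∑ a : ZMod d, κ x' y a b) :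
    ∀ (l : Fin (2 * m - 2) → ZMod d) (t : ZMod d) (i : ℕ), 3 ≤ i → i ≤ m →
      ∑ l' ∈ Finset.univ.filter (fun l' : Fin (2 * m - 2) → ZMod d =>
          ∀ j : Fin (2 * m - 2), 2 * i ≤ (j : ℕ) + 4 → l' j = l j),
        FFun d m κ l' i (t + cOf d m l' i) =
      margB d κ (i - 1) (t + qOf d m l (2 * i - 2)) * gFun d m κ l i t := by
  intro l t i hi3 him
  have hset : Finset.univ.filter (fun l' : Fin (2 * m - 2) → ZMod d =>
      ∀ j : Fin (2 * m - 2), 2 * i ≤ (j : ℕ) + 4 → l' j = l j) =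
      Sset d m (2 * i - 4) l := by
    ext l'
    simp only [Sset, Finset.mem_filter, Finset.mem_univ, true_and]
    constructor
    · intro h j hj; exact h j (by omega)
    · intro h j hj; exact h j (by omega)
  rw [hset]
  exact Qlem d m κ hpos hnsA hnsB i (by omega) him l t
end
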